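/- Let u, v : ℝ² → ℂ be twice continuously differentiable functions and let β ∈ ℂ with β ≠ 0. Define A₁ = −∂_x u − i·∂_y v + β·sin((u+v)/2) + β⁻¹·sin((u−v)/2) and A₂ = −i·∂_y u − ∂_x v − β·sin((u+v)/2) + β⁻¹·sin((u−v)/2). Then at every point of ℝ²: ∂_x A₂ − i·∂_y A₁ = −Δv + sin v + A₁·( (β/2)·cos((u+v)/2) − (β⁻¹/2)·cos((u−v)/2) ) + A₂·( (β/2)·cos((u+v)/2) + (β⁻¹/2)·cos((u−v)/2) ), where Δv = ∂_x²v + ∂_y²v and sin, cos are the complex sine and cosine. -/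

import Mathlib

/-- Partial derivative in the first variable of a complex-valued function on ℝ². -/
noncomputable def pdx (u : ℝ → ℝ → ℂ) (x y : ℝ) : ℂ := deriv (fun s => u s y) x

/-- Partial derivative in the second variable of a complex-valued function on ℝ². -/
noncomputable def pdy (u : ℝ → ℝ → ℂ) (x y : ℝ) : ℂ := deriv (fun t => u x t) y

/-- The Laplacian of a complex-valued function on ℝ². -/
noncomputable def lap (u : ℝ → ℝ → ℂ) (x y : ℝ) : ℂ := pdx (pdx u) x y + pdy (pdy u) x y

/-- First residual of the Bäcklund transformation system with parameter β. -/
noncomputable def A₁ (β : ℂ) (u v : ℝ → ℝ → ℂ) (x y : ℝ) : ℂ :=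
  -pdx u x y - Complex.I * pdy v x y + β * Complex.sin ((u x y + v x y) / 2) +
    β⁻¹ * Complex.sin ((u x y - v x y) / 2)

/-- Second residual of the Bäcklund transformation system with parameter β. -/
noncomputable def A₂ (β : ℂ) (u v : ℝ → ℝ → ℂ) (x y : ℝ) : ℂ :=
  -Complex.I * pdy u x y - pdx v x y - β * Complex.sin ((u x y + v x y) / 2) +
    β⁻¹ * Complex.sin ((u x y - v x y) / 2)

namespace BIhelp

variable {f : ℝ → ℝ → ℂ}

lemma sliceX (x y : ℝ) (hd : DifferentiableAt ℝ (fun p : ℝ × ℝ => f p.1 p.2) (x, y)) :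
    HasDerivAt (fun s => f s y) (fderiv ℝ (fun p : ℝ × ℝ => f p.1 p.2) (x, y) (1, 0)) x := by
  have h : HasDerivAt (fun s : ℝ => ((s, y) : ℝ × ℝ)) (1, 0) x :=
    (hasDerivAt_id x).prodMk (hasDerivAt_const x y)
  exact hd.hasFDerivAt.comp_hasDerivAt x h

lemma sliceY (x y : ℝ) (hd : DifferentiableAt ℝ (fun p : ℝ × ℝ => f p.1 p.2) (x, y)) :
    HasDerivAt (fun t => f x t) (fderiv ℝ (fun p : ℝ × ℝ => f p.1 p.2) (x, y) (0, 1)) y := by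
  have h : HasDerivAt (fun t : ℝ => ((x, t) : ℝ × ℝ)) (0, 1) y :=
    (hasDerivAt_const y x).prodMk (hasDerivAt_id y)
  exact hd.hasFDerivAt.comp_hasDerivAt y h

lemma hasDerivAt_pdx (hd : Differentiable ℝ (fun p : ℝ × ℝ => f p.1 p.2)) (x y : ℝ) :
    HasDerivAt (fun s => f s y) (pdx f x y) x :=
  (sliceX x y (hd (x, y))).differentiableAt.hasDerivAt

lemma hasDerivAt_pdy (hd : Differentiable ℝ (fun p : ℝ × ℝ => f p.1 p.2)) (x y : ℝ) :
    HasDerivAt (fun t => f x t) (pdy f x y) y :=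
  (sliceY x y (hd (x, y))).differentiableAt.hasDerivAt

lemma pdx_eq (hd : Differentiable ℝ (fun p : ℝ × ℝ => f p.1 p.2)) (x y : ℝ) :
    pdx f x y = fderiv ℝ (fun p : ℝ × ℝ => f p.1 p.2) (x, y) (1, 0) :=
  (sliceX x y (hd (x, y))).deriv

lemma pdy_eq (hd : Differentiable ℝ (fun p : ℝ × ℝ => f p.1 p.2)) (x y : ℝ) :
    pdy f x y = fderiv ℝ (fun p : ℝ × ℝ => f p.1 p.2) (x, y) (0, 1) :=
  (sliceY x y (hd (x, y))).deriv

lemma diff_fderiv_apply (hf : ContDiff ℝ 2 (fun p : ℝ × ℝ => f p.1 p.2)) (w : ℝ × ℝ) :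
    Differentiable ℝ (fun p : ℝ × ℝ => fderiv ℝ (fun p : ℝ × ℝ => f p.1 p.2) p w) :=
  ((hf.fderiv_right (m := 1) (by norm_num)).clm_apply contDiff_const).differentiable one_ne_zero

lemma pdx_fun_eq (hf : ContDiff ℝ 2 (fun p : ℝ × ℝ => f p.1 p.2)) :
    (fun p : ℝ × ℝ => pdx f p.1 p.2) =
      fun p : ℝ × ℝ => fderiv ℝ (fun p : ℝ × ℝ => f p.1 p.2) p (1, 0) := by
  funext p
  rw [pdx_eq (hf.differentiable two_ne_zero) p.1 p.2]

lemma pdy_fun_eq (hf : ContDiff ℝ 2 (fun p : ℝ × ℝ => f p.1 p.2)) :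
    (fun p : ℝ × ℝ => pdy f p.1 p.2) =
      fun p : ℝ × ℝ => fderiv ℝ (fun p : ℝ × ℝ => f p.1 p.2) p (0, 1) := by
  funext p
  rw [pdy_eq (hf.differentiable two_ne_zero) p.1 p.2]

lemma diff_pdx (hf : ContDiff ℝ 2 (fun p : ℝ × ℝ => f p.1 p.2)) :
    Differentiable ℝ (fun p : ℝ × ℝ => pdx f p.1 p.2) := by
  rw [pdx_fun_eq hf]; exact diff_fderiv_apply hf _

lemma diff_pdy (hf : ContDiff ℝ 2 (fun p : ℝ × ℝ => f p.1 p.2)) :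
    Differentiable ℝ (fun p : ℝ × ℝ => pdy f p.1 p.2) := by
  rw [pdy_fun_eq hf]; exact diff_fderiv_apply hf _

lemma mixed_symm (hf : ContDiff ℝ 2 (fun p : ℝ × ℝ => f p.1 p.2)) (x y : ℝ) :
    pdx (pdy f) x y = pdy (pdx f) x y := by
  have hder : DifferentiableAt ℝ (fderiv ℝ (fun p : ℝ × ℝ => f p.1 p.2)) (x, y) :=
    ((hf.fderiv_right (m := 1) (by norm_num)).differentiable one_ne_zero) (x, y)
  have key : ∀ w z : ℝ × ℝ,
      fderiv ℝ (fun p : ℝ × ℝ => fderiv ℝ (fun p : ℝ × ℝ => f p.1 p.2) p w) (x, y) z =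
        fderiv ℝ (fderiv ℝ (fun p : ℝ × ℝ => f p.1 p.2)) (x, y) z w := by
    intro w z
    rw [fderiv_clm_apply hder (differentiableAt_const w)]
    simp
  have e1 : pdx (pdy f) x y =
      fderiv ℝ (fun p : ℝ × ℝ => fderiv ℝ (fun p : ℝ × ℝ => f p.1 p.2) p (0, 1)) (x, y) (1, 0) := by
    rw [pdx_eq (diff_pdy hf) x y, pdy_fun_eq hf]
  have e2 : pdy (pdx f) x y =
      fderiv ℝ (fun p : ℝ × ℝ => fderiv ℝ (fun p : ℝ × ℝ => f p.1 p.2) p (1, 0)) (x, y) (0, 1) := by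
    rw [pdy_eq (diff_pdx hf) x y, pdx_fun_eq hf]
  rw [e1, e2, key, key]
  exact (hf.contDiffAt.isSymmSndFDerivAt (by simp [minSmoothness_of_isRCLikeNormedField])) _ _

lemma csin' {g : ℝ → ℂ} {g' : ℂ} {x : ℝ} (hg : HasDerivAt g g' x) :
    HasDerivAt (fun s => Complex.sin (g s)) (Complex.cos (g x) * g') x := by
  have h := (Complex.hasDerivAt_sin (g x)).scomp x hg
  rw [smul_eq_mul, mul_comm] at h
  exact h

end BIhelp

theorem backlund_residual_identity (β : ℂ) (hβ : β ≠ 0) (u v : ℝ → ℝ → ℂ)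
    (hu : ContDiff ℝ 2 (fun p : ℝ × ℝ => u p.1 p.2))
    (hv : ContDiff ℝ 2 (fun p : ℝ × ℝ => v p.1 p.2)) :
    ∀ x y : ℝ,
      pdx (A₂ β u v) x y - Complex.I * pdy (A₁ β u v) x y =
        -lap v x y + Complex.sin (v x y) +
          A₁ β u v x y * ((β / 2) * Complex.cos ((u x y + v x y) / 2) -
            (β⁻¹ / 2) * Complex.cos ((u x y - v x y) / 2)) +
          A₂ β u v x y * ((β / 2) * Complex.cos ((u x y + v x y) / 2) +
            (β⁻¹ / 2) * Complex.cos ((u x y - v x y) / 2)) := by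
  intro x y
  have hud := hu.differentiable two_ne_zero
  have hvd := hv.differentiable two_ne_zero
  have hux := BIhelp.hasDerivAt_pdx hud x y
  have hvx := BIhelp.hasDerivAt_pdx hvd x y
  have huy := BIhelp.hasDerivAt_pdy hud x y
  have hvy := BIhelp.hasDerivAt_pdy hvd x y
  have hpyu_x := BIhelp.hasDerivAt_pdx (BIhelp.diff_pdy hu) x y
  have hpxv_x := BIhelp.hasDerivAt_pdx (BIhelp.diff_pdx hv) x y
  have hpxu_y := BIhelp.hasDerivAt_pdy (BIhelp.diff_pdx hu) x y
  have hpyv_y := BIhelp.hasDerivAt_pdy (BIhelp.diff_pdy hv) x y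
  have hs1 : HasDerivAt (fun s => Complex.sin ((u s y + v s y) / 2))
      (Complex.cos ((u x y + v x y) / 2) * ((pdx u x y + pdx v x y) / 2)) x :=
    BIhelp.csin' ((hux.add hvx).div_const 2)
  have hs2 : HasDerivAt (fun s => Complex.sin ((u s y - v s y) / 2))
      (Complex.cos ((u x y - v x y) / 2) * ((pdx u x y - pdx v x y) / 2)) x :=
    BIhelp.csin' ((hux.sub hvx).div_const 2)
  have hs3 : HasDerivAt (fun t => Complex.sin ((u x t + v x t) / 2))
      (Complex.cos ((u x y + v x y) / 2) * ((pdy u x y + pdy v x y) / 2)) y :=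
    BIhelp.csin' ((huy.add hvy).div_const 2)
  have hs4 : HasDerivAt (fun t => Complex.sin ((u x t - v x t) / 2))
      (Complex.cos ((u x y - v x y) / 2) * ((pdy u x y - pdy v x y) / 2)) y :=
    BIhelp.csin' ((huy.sub hvy).div_const 2)
  have hA2 : HasDerivAt (fun s => A₂ β u v s y)
      (-Complex.I * pdx (pdy u) x y - pdx (pdx v) x y -
        β * (Complex.cos ((u x y + v x y) / 2) * ((pdx u x y + pdx v x y) / 2)) +
        β⁻¹ * (Complex.cos ((u x y - v x y) / 2) * ((pdx u x y - pdx v x y) / 2))) x := by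
    unfold A₂
    exact (((hpyu_x.const_mul (-Complex.I)).sub hpxv_x).sub (hs1.const_mul β)).add
      (hs2.const_mul β⁻¹)
  have hA1 : HasDerivAt (fun t => A₁ β u v x t)
      (-(pdy (pdx u) x y) - Complex.I * pdy (pdy v) x y +
        β * (Complex.cos ((u x y + v x y) / 2) * ((pdy u x y + pdy v x y) / 2)) +
        β⁻¹ * (Complex.cos ((u x y - v x y) / 2) * ((pdy u x y - pdy v x y) / 2))) y := by
    unfold A₁
    exact ((hpxu_y.neg.sub (hpyv_y.const_mul Complex.I)).add (hs3.const_mul β)).add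
      (hs4.const_mul β⁻¹)
  have hsv : Complex.sin (v x y) =
      Complex.sin ((u x y + v x y) / 2) * Complex.cos ((u x y - v x y) / 2) -
        Complex.cos ((u x y + v x y) / 2) * Complex.sin ((u x y - v x y) / 2) := by
    have h := Complex.sin_sub ((u x y + v x y) / 2) ((u x y - v x y) / 2)
    rw [show (u x y + v x y) / 2 - (u x y - v x y) / 2 = v x y by ring] at h
    exact h
  rw [show pdx (A₂ β u v) x y = _ from hA2.deriv, show pdy (A₁ β u v) x y = _ from hA1.deriv,
    BIhelp.mixed_symm hu x y, hsv]
  simp only [lap, A₁, A₂]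
  linear_combination (pdy (pdy v) x y) * Complex.I_mul_I +
    (Complex.sin ((u x y + v x y) / 2) * Complex.cos ((u x y - v x y) / 2) -
      Complex.cos ((u x y + v x y) / 2) * Complex.sin ((u x y - v x y) / 2)) *
      (mul_inv_cancel₀ hβ)
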